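/- Let s ≥ 2 and k ≥ 1 be integers, let θ be a bijection of the k-blocks (Fin k → Fin s) with θ (fun _ => 0) ≠ (fun _ => s − 1), and let F : ℝ → ℝ satisfy: for every admissible digit sequence a, F(∑_{n=0}^∞ a n / s^{n+1}) = ∑_{n=0}^∞ (Θ a) n / s^{n+1}. If the set of fixed points of θ (blocks b with θ b = b) has cardinality j with j ≥ 2, then the set of invariant points of F in [0,1), namely { x ∈ [0,1) : F x = x }, has Hausdorff dimension (log j) / (k · log s). (Paper's Lemma 8, first case.) -/

import Mathlib

open Filter Set
open scoped NNReal ENNReal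

namespace L8

/-- admissibility: not eventually `T-1`. -/
def Adm (T : ℕ) (a : ℕ → ℕ) : Prop := ¬ ∃ N, ∀ n ≥ N, a n = T - 1

/-- base-`T` expansion sum. -/
noncomputable def ex (T : ℕ) (a : ℕ → ℕ) : ℝ := ∑' n, (a n : ℝ) / (T : ℝ) ^ (n + 1)

variable {T : ℕ}

lemma Tpos (hT : 2 ≤ T) : (0 : ℝ) < T := by positivity

lemma term_nonneg (a : ℕ → ℕ) (n : ℕ) (hT : 2 ≤ T) : 0 ≤ (a n : ℝ) / (T : ℝ) ^ (n + 1) := by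
  have := Tpos hT; positivity

lemma digit_le (hT : 2 ≤ T) {a : ℕ → ℕ} (ha : ∀ n, a n < T) (n : ℕ) :
    (a n : ℝ) ≤ (T : ℝ) - 1 := by
  have h := ha n
  have : (a n : ℝ) ≤ ((T - 1 : ℕ) : ℝ) := by exact_mod_cast (by omega : a n ≤ T - 1)
  calc (a n : ℝ) ≤ ((T-1:ℕ):ℝ) := this
    _ = (T:ℝ) - 1 := by push_cast [(by omega : 1 ≤ T)]; ring

lemma summable_ex (hT : 2 ≤ T) (a : ℕ → ℕ) (ha : ∀ n, a n < T) :
    Summable (fun n => (a n : ℝ) / (T : ℝ) ^ (n + 1)) := by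
  have hT0 := Tpos hT
  have hsum : Summable (fun n : ℕ => ((1:ℝ)/T) ^ n) := by
    apply summable_geometric_of_lt_one (by positivity)
    rw [div_lt_one hT0]; exact_mod_cast hT.trans_lt' one_lt_two
  refine Summable.of_nonneg_of_le (fun n => term_nonneg a n hT) (fun n => ?_) hsum
  rw [div_pow, one_pow, div_le_div_iff₀ (by positivity) (by positivity)]
  have : (a n : ℝ) ≤ T := by exact_mod_cast (ha n).le
  calc (a n : ℝ) * T ^ n ≤ (T : ℝ) * T ^ n := by
        apply mul_le_mul_of_nonneg_right this (by positivity)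
    _ = 1 * T ^ (n + 1) := by ring

lemma ex_nonneg (hT : 2 ≤ T) (a : ℕ → ℕ) : 0 ≤ ex T a :=
  tsum_nonneg (fun n => term_nonneg a n hT)

lemma geom_term (hT : 2 ≤ T) (N n : ℕ) :
    ((T : ℝ) - 1) / (T : ℝ) ^ ((n + N) + 1) = (((T:ℝ) - 1) / T ^ (N+1)) * ((1/T) ^ n) := by
  have hT0 := Tpos hT
  rw [div_pow, one_pow, div_mul_div_comm, mul_one,
    show (n + N) + 1 = (N + 1) + n by omega, pow_add]

lemma summable_geom_shift (hT : 2 ≤ T) (N : ℕ) :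
    Summable (fun n : ℕ => ((T : ℝ) - 1) / (T : ℝ) ^ ((n + N) + 1)) := by
  have hT0 := Tpos hT
  apply Summable.congr (f := fun n => (((T:ℝ)-1)/T^(N+1)) * ((1/T)^n))
  · apply Summable.mul_left
    apply summable_geometric_of_lt_one (by positivity)
    rw [div_lt_one hT0]; exact_mod_cast hT.trans_lt' one_lt_two
  · intro n; rw [geom_term hT]

lemma geom_tail (hT : 2 ≤ T) (N : ℕ) :
    ∑' n : ℕ, ((T : ℝ) - 1) / (T : ℝ) ^ ((n + N) + 1) = (1 / (T : ℝ)) ^ N := by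
  have hT0 := Tpos hT
  have h1 : ((1:ℝ)/T) < 1 := by
    rw [div_lt_one hT0]; exact_mod_cast hT.trans_lt' one_lt_two
  rw [tsum_congr (geom_term hT N), tsum_mul_left, tsum_geometric_of_lt_one (by positivity) h1]
  have hTne : (T : ℝ) ≠ 0 := ne_of_gt hT0
  have hT1 : (T : ℝ) - 1 ≠ 0 := by
    have : (2:ℝ) ≤ T := by exact_mod_cast hT
    nlinarith
  rw [div_pow, one_pow]
  field_simp
  ring

lemma tail_le (hT : 2 ≤ T) (a : ℕ → ℕ) (ha : ∀ n, a n < T) (N : ℕ) :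
    ∑' n : ℕ, (a (n + N) : ℝ) / (T : ℝ) ^ ((n + N) + 1) ≤ (1 / (T : ℝ)) ^ N := by
  rw [← geom_tail hT N]
  apply Summable.tsum_le_tsum
  · intro n
    exact div_le_div_of_nonneg_right (digit_le hT ha (n+N)) (by have := Tpos hT; positivity)
  · exact (summable_ex hT a ha).comp_injective (add_left_injective N)
  · exact summable_geom_shift hT N

lemma tail_nonneg (hT : 2 ≤ T) (a : ℕ → ℕ) (N : ℕ) :
    0 ≤ ∑' n : ℕ, (a (n + N) : ℝ) / (T : ℝ) ^ ((n + N) + 1) :=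
  tsum_nonneg (fun n => term_nonneg a (n+N) hT)

lemma tail_lt (hT : 2 ≤ T) (a : ℕ → ℕ) (ha : ∀ n, a n < T) (hadm : Adm T a) (N : ℕ) :
    ∑' n : ℕ, (a (n + N) : ℝ) / (T : ℝ) ^ ((n + N) + 1) < (1 / (T : ℝ)) ^ N := by
  have hT0 := Tpos hT
  rw [← geom_tail hT N]
  obtain ⟨n₀, hn₀N, hn₀⟩ : ∃ n₀ ≥ N, a n₀ ≠ T - 1 := by
    by_contra h; push_neg at h; exact hadm ⟨N, h⟩
  apply Summable.tsum_lt_tsum (i := n₀ - N)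
  · intro n
    exact div_le_div_of_nonneg_right (digit_le hT ha (n+N)) (by positivity)
  · have hidx : n₀ - N + N = n₀ := by omega
    rw [hidx]
    apply div_lt_div_of_pos_right ?_ (by positivity)
    have h1 : a n₀ + 1 ≤ T - 1 := by have := ha n₀; omega
    have : (a n₀ : ℝ) + 1 ≤ ((T - 1 : ℕ) : ℝ) := by exact_mod_cast h1
    have h2 : ((T-1:ℕ):ℝ) = (T:ℝ) - 1 := by push_cast [(by omega : 1 ≤ T)]; ring
    linarith [h2 ▸ this]
  · exact (summable_ex hT a ha).comp_injective (add_left_injective N)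
  · exact summable_geom_shift hT N

lemma ex_split (hT : 2 ≤ T) (a : ℕ → ℕ) (ha : ∀ n, a n < T) (N : ℕ) :
    ex T a = (∑ n ∈ Finset.range N, (a n : ℝ) / (T:ℝ) ^ (n+1))
      + ∑' n : ℕ, (a (n + N) : ℝ) / (T : ℝ) ^ ((n + N) + 1) :=
  (Summable.sum_add_tsum_nat_add N (summable_ex hT a ha)).symm

lemma ex_lt_one (hT : 2 ≤ T) (a : ℕ → ℕ) (ha : ∀ n, a n < T) (hadm : Adm T a) :
    ex T a < 1 := by
  have := tail_lt hT a ha hadm 0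
  simpa [ex] using this

lemma ex_le_one (hT : 2 ≤ T) (a : ℕ → ℕ) (ha : ∀ n, a n < T) : ex T a ≤ 1 := by
  have := tail_le hT a ha 0
  simpa [ex] using this

lemma ex_lt_of_firstdiff (hT : 2 ≤ T) {a b : ℕ → ℕ} (ha : ∀ n, a n < T) (hb : ∀ n, b n < T)
    (hadm : Adm T a) {n₀ : ℕ} (hpre : ∀ m < n₀, a m = b m) (hlt : a n₀ < b n₀) :
    ex T a < ex T b := by
  have hT0 := Tpos hT
  have hsplit_a := ex_split hT a ha (n₀+1)
  have hsplit_b := ex_split hT b hb (n₀+1)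
  have hPeq : ∑ n ∈ Finset.range n₀, (a n : ℝ) / (T:ℝ)^(n+1)
      = ∑ n ∈ Finset.range n₀, (b n : ℝ) / (T:ℝ)^(n+1) := by
    apply Finset.sum_congr rfl
    intro m hm
    rw [hpre m (Finset.mem_range.1 hm)]
  rw [Finset.sum_range_succ] at hsplit_a hsplit_b
  have hta := tail_lt hT a ha hadm (n₀+1)
  have htb := tail_nonneg hT b (n₀+1)
  have hcast : (a n₀ : ℝ) + 1 ≤ (b n₀ : ℝ) := by exact_mod_cast hlt
  have hpow : ((1:ℝ)/T)^(n₀+1) = 1 / (T:ℝ)^(n₀+1) := by rw [div_pow, one_pow]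
  have hstep : (a n₀ : ℝ)/(T:ℝ)^(n₀+1) + ((1:ℝ)/T)^(n₀+1) ≤ (b n₀ : ℝ)/(T:ℝ)^(n₀+1) := by
    rw [hpow, ← add_div]
    exact div_le_div_of_nonneg_right hcast (by positivity)
  calc ex T a < (∑ n ∈ Finset.range n₀, (a n : ℝ)/(T:ℝ)^(n+1)) + (a n₀:ℝ)/(T:ℝ)^(n₀+1)
        + ((1:ℝ)/T)^(n₀+1) := by rw [hsplit_a]; linarith
    _ ≤ (∑ n ∈ Finset.range n₀, (b n : ℝ)/(T:ℝ)^(n+1)) + (b n₀:ℝ)/(T:ℝ)^(n₀+1) := by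
        rw [hPeq] at *; linarith
    _ ≤ ex T b := by rw [hsplit_b]; linarith

lemma ex_inj (hT : 2 ≤ T) {a b : ℕ → ℕ} (ha : ∀ n, a n < T) (hb : ∀ n, b n < T)
    (hadma : Adm T a) (hadmb : Adm T b) (h : ex T a = ex T b) : a = b := by
  by_contra hne
  have hex : ∃ n, a n ≠ b n := Function.ne_iff.1 hne
  classical
  let n₀ := Nat.find hex
  have hn₀ : a n₀ ≠ b n₀ := Nat.find_spec hex
  have hpre : ∀ m < n₀, a m = b m := fun m hm => by
    have := Nat.find_min hex hm; simpa using this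
  rcases lt_or_gt_of_ne hn₀ with hlt | hgt
  · exact absurd h (ne_of_lt (ex_lt_of_firstdiff hT ha hb hadma hpre hlt))
  · exact absurd h.symm
      (ne_of_lt (ex_lt_of_firstdiff hT hb ha hadmb (fun m hm => (hpre m hm).symm) hgt))

lemma exists_digits (hT : 2 ≤ T) (x : ℝ) (h0 : 0 ≤ x) (h1 : x < 1) :
    ∃ a : ℕ → ℕ, (∀ n, a n < T) ∧ Adm T a ∧ ex T a = x := by
  have hT0 := Tpos hT
  set a : ℕ → ℕ := fun n => ⌊x * (T:ℝ)^(n+1)⌋₊ - T * ⌊x * (T:ℝ)^n⌋₊ with ha_def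
  have hnn : ∀ n : ℕ, 0 ≤ x * (T:ℝ)^n := fun n => by positivity
  have key1 : ∀ n, T * ⌊x * (T:ℝ)^n⌋₊ ≤ ⌊x * (T:ℝ)^(n+1)⌋₊ := by
    intro n
    apply Nat.le_floor
    push_cast
    calc (T:ℝ) * ⌊x * (T:ℝ)^n⌋₊ ≤ T * (x * T^n) := by
          apply mul_le_mul_of_nonneg_left (Nat.floor_le (hnn n)) (le_of_lt hT0)
      _ = x * T^(n+1) := by ring
  have key2 : ∀ n, ⌊x * (T:ℝ)^(n+1)⌋₊ < T * ⌊x * (T:ℝ)^n⌋₊ + T := by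
    intro n
    rw [Nat.floor_lt (hnn (n+1))]
    push_cast
    calc x * (T:ℝ)^(n+1) = T * (x * T^n) := by ring
      _ < T * (⌊x * (T:ℝ)^n⌋₊ + 1) := by
          apply mul_lt_mul_of_pos_left (Nat.lt_floor_add_one _) hT0
      _ = T * ⌊x * (T:ℝ)^n⌋₊ + T := by ring
  have ha : ∀ n, a n < T := by
    intro n; have := key1 n; have := key2 n; simp only [ha_def]; omega
  have hpartial : ∀ N, ∑ n ∈ Finset.range N, (a n : ℝ)/(T:ℝ)^(n+1)
      = (⌊x * (T:ℝ)^N⌋₊ : ℝ) / (T:ℝ)^N := by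
    intro N
    induction N with
    | zero => simp [Nat.floor_eq_zero.2 (by simpa using h1)]
    | succ N ih =>
      rw [Finset.sum_range_succ, ih]
      have hcast : (a N : ℝ) = (⌊x * (T:ℝ)^(N+1)⌋₊ : ℝ) - T * ⌊x * (T:ℝ)^N⌋₊ := by
        simp only [ha_def]
        push_cast [key1 N]
        ring
      rw [hcast]
      field_simp
      ring
  have happrox : ∀ N, x - ((1:ℝ)/T)^N < (⌊x * (T:ℝ)^N⌋₊ : ℝ) / (T:ℝ)^N
      ∧ (⌊x * (T:ℝ)^N⌋₊ : ℝ) / (T:ℝ)^N ≤ x := by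
    intro N
    have hfl := Nat.floor_le (hnn N)
    have hfu := Nat.lt_floor_add_one (x * (T:ℝ)^N)
    have hp : (0:ℝ) < (T:ℝ)^N := by positivity
    constructor
    · rw [div_pow, one_pow, sub_lt_iff_lt_add, ← add_div, lt_div_iff₀ hp]
      linarith
    · rw [div_le_iff₀ hp]; linarith
  have hsum := (summable_ex hT a ha).hasSum
  have htend1 : Tendsto (fun N => ∑ n ∈ Finset.range N, (a n : ℝ)/(T:ℝ)^(n+1)) atTop (nhds (ex T a)) :=
    hsum.tendsto_sum_nat
  have hgeo : Tendsto (fun N : ℕ => ((1:ℝ)/T)^N) atTop (nhds 0) := by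
    apply tendsto_pow_atTop_nhds_zero_of_lt_one (by positivity)
    rw [div_lt_one hT0]; exact_mod_cast hT.trans_lt' one_lt_two
  have htend2 : Tendsto (fun N => ∑ n ∈ Finset.range N, (a n : ℝ)/(T:ℝ)^(n+1)) atTop (nhds x) := by
    apply tendsto_of_tendsto_of_tendsto_of_le_of_le (g := fun N : ℕ => x - ((1:ℝ)/T)^N)
      (h := fun _ : ℕ => x)
    · simpa using (tendsto_const_nhds.sub hgeo)
    · exact tendsto_const_nhds
    · intro N; simp only; rw [hpartial N]; exact (happrox N).1.le
    · intro N; simp only; rw [hpartial N]; exact (happrox N).2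
  have hexx : ex T a = x := tendsto_nhds_unique htend1 htend2
  refine ⟨a, ha, ?_, hexx⟩
  rintro ⟨N, hN⟩
  have htail : ∑' n : ℕ, (a (n + N) : ℝ) / (T:ℝ)^((n + N) + 1) = ((1:ℝ)/T)^N := by
    rw [← geom_tail hT N]
    apply tsum_congr
    intro n
    congr 1
    have h := hN (n+N) (by omega)
    rw [h]
    push_cast [(by omega : 1 ≤ T)]
    ring
  have := ex_split hT a ha N
  rw [htail, hpartial N, hexx] at this
  have hstrict := (happrox N).1
  linarith

def val (T N : ℕ) (b : ℕ → ℕ) : ℕ := ∑ m ∈ Finset.range N, b m * T ^ m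

lemma val_congr {T N : ℕ} {b c : ℕ → ℕ} (h : ∀ m < N, b m = c m) : val T N b = val T N c :=
  Finset.sum_congr rfl (fun m hm => by rw [h m (Finset.mem_range.1 hm)])

lemma val_lt_pow {T N : ℕ} {b : ℕ → ℕ} (hT : 1 ≤ T) (hb : ∀ m < N, b m < T) :
    val T N b < T ^ N := by
  induction N with
  | zero => simpa [val] using Nat.one_le_iff_ne_zero.mp (Nat.one_le_pow 0 T hT)
  | succ N ih =>
    have h1 : val T N b < T ^ N := ih (fun m hm => hb m (by omega))
    have h2 : b N + 1 ≤ T := hb N (by omega)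
    calc val T (N+1) b = val T N b + b N * T ^ N := Finset.sum_range_succ _ _
      _ < T ^ N + b N * T ^ N := by omega
      _ = (b N + 1) * T ^ N := by ring
      _ ≤ T * T ^ N := Nat.mul_le_mul_right _ h2
      _ = T ^ (N + 1) := (pow_succ' T N).symm

lemma val_split {T N i : ℕ} (hiN : i < N) (b : ℕ → ℕ) :
    val T N b = val T (i+1) b + ∑ m ∈ Finset.Ico (i+1) N, b m * T ^ m := by
  simp only [val, Finset.range_eq_Ico]
  exact (Finset.sum_Ico_consecutive _ (Nat.zero_le (i+1)) (by omega : i+1 ≤ N)).symm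

lemma val_lt_of_firstdiff {T N : ℕ} (hT : 1 ≤ T) {b c : ℕ → ℕ}
    (hb : ∀ m < N, b m < T) {i : ℕ} (hiN : i < N) (hlt : b i < c i)
    (heq : ∀ k, i < k → k < N → b k = c k) : val T N b < val T N c := by
  rw [val_split hiN b, val_split hiN c]
  have htail : ∑ m ∈ Finset.Ico (i+1) N, b m * T ^ m
      = ∑ m ∈ Finset.Ico (i+1) N, c m * T ^ m := by
    apply Finset.sum_congr rfl
    intro m hm
    rw [heq m (Finset.mem_Ico.1 hm).1 (Finset.mem_Ico.1 hm).2]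
  rw [htail]
  have hhead : val T (i+1) b < val T (i+1) c := by
    have h1 : val T i b < T ^ i := val_lt_pow hT (fun m hm => hb m (by omega))
    have h2 : val T (i+1) b = val T i b + b i * T ^ i := Finset.sum_range_succ _ _
    have h3 : val T (i+1) c = val T i c + c i * T ^ i := Finset.sum_range_succ _ _
    have h4 : (b i + 1) * T ^ i ≤ c i * T ^ i := Nat.mul_le_mul_right _ hlt
    have h5 : (b i + 1) * T ^ i = b i * T ^ i + T ^ i := by ring
    omega
  omega

lemma val_eq_digits {T N : ℕ} (hT : 1 ≤ T) {b c : ℕ → ℕ}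
    (hb : ∀ m < N, b m < T) (hc : ∀ m < N, c m < T)
    (h : val T N b = val T N c) : ∀ m < N, b m = c m := by
  by_contra hcon
  push_neg at hcon
  obtain ⟨m₀, hm₀N, hm₀⟩ := hcon
  set S := (Finset.range N).filter (fun m => b m ≠ c m) with hS
  have hne : S.Nonempty := ⟨m₀, by simp [hS, hm₀N, hm₀]⟩
  set i := S.max' hne with hi
  have hiS : i ∈ S := S.max'_mem hne
  have hiN : i < N := Finset.mem_range.1 (Finset.mem_filter.1 hiS).1
  have hibc : b i ≠ c i := (Finset.mem_filter.1 hiS).2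
  have hhigh : ∀ k, i < k → k < N → b k = c k := by
    intro k hik hkN
    by_contra hk
    have : k ∈ S := by simp [hS, hkN, hk]
    have := S.le_max' k this
    omega
  rcases lt_or_gt_of_ne hibc with hlt | hgt
  · exact absurd h (Nat.ne_of_lt (val_lt_of_firstdiff hT hb hiN hlt hhigh))
  · exact absurd h.symm (Nat.ne_of_lt (val_lt_of_firstdiff hT hc hiN hgt
      (fun k h1 h2 => (hhigh k h1 h2).symm)))

lemma val_lt_iff {T N : ℕ} (hT : 1 ≤ T) {b c : ℕ → ℕ}
    (hb : ∀ m < N, b m < T) (hc : ∀ m < N, c m < T) :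
    val T N b < val T N c ↔
      ∃ i, i < N ∧ b i < c i ∧ ∀ k, i < k → k < N → b k = c k := by
  constructor
  · intro h
    have hne : ∃ m, m < N ∧ b m ≠ c m := by
      by_contra hcon
      push_neg at hcon
      rw [val_congr (fun m hm => hcon m hm)] at h
      exact lt_irrefl _ h
    obtain ⟨m₀, hm₀N, hm₀⟩ := hne
    set S := (Finset.range N).filter (fun m => b m ≠ c m) with hS
    have hSne : S.Nonempty := ⟨m₀, by simp [hS, hm₀N, hm₀]⟩
    set i := S.max' hSne with hi
    have hiS : i ∈ S := S.max'_mem hSne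
    have hiN : i < N := Finset.mem_range.1 (Finset.mem_filter.1 hiS).1
    have hibc : b i ≠ c i := (Finset.mem_filter.1 hiS).2
    have hhigh : ∀ k, i < k → k < N → b k = c k := by
      intro k hik hkN
      by_contra hk
      have : k ∈ S := by simp [hS, hkN, hk]
      have := S.le_max' k this
      omega
    rcases lt_or_gt_of_ne hibc with hlt | hgt
    · exact ⟨i, hiN, hlt, hhigh⟩
    · exact absurd h (not_lt_of_gt (val_lt_of_firstdiff hT hc hiN hgt
        (fun k h1 h2 => (hhigh k h1 h2).symm)))
  · rintro ⟨i, hiN, hlt, heq⟩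
    exact val_lt_of_firstdiff hT hb hiN hlt heq

section transport
variable {j t : ℕ} {ι : Fin j → Fin t}

lemma val_transport (hι : StrictMono ι) (hj : 1 ≤ j) (ht : 1 ≤ t) (N : ℕ) (e f : ℕ → Fin j) :
    val t N (fun m => (ι (e m) : ℕ)) < val t N (fun m => (ι (f m) : ℕ)) ↔
      val j N (fun m => (e m : ℕ)) < val j N (fun m => (f m : ℕ)) := by
  rw [val_lt_iff ht (fun m _ => (ι (e m)).isLt) (fun m _ => (ι (f m)).isLt),
    val_lt_iff hj (fun m _ => (e m).isLt) (fun m _ => (f m).isLt)]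
  apply exists_congr
  intro i
  apply and_congr_right'
  apply and_congr
  · constructor
    · intro h; exact hι.lt_iff_lt.1 (by exact_mod_cast h)
    · intro h; exact_mod_cast hι.lt_iff_lt.2 h
  · apply forall_congr'; intro k
    apply imp_congr_right; intro _
    apply imp_congr_right; intro _
    constructor
    · intro h
      have : ι (e k) = ι (f k) := Fin.val_injective h
      exact congrArg Fin.val (hι.injective this)
    · intro h
      have : e k = f k := Fin.val_injective h
      exact congrArg Fin.val (congrArg ι this)

variable {n : ℕ}

/-- extension of a finite word by `0`. -/
def ew (hj : 0 < j) (w : Fin n → Fin j) : ℕ → Fin j :=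
  fun m => if h : m < n then w ⟨m, h⟩ else ⟨0, hj⟩

lemma val_nw_eq (hj : 0 < j) (w : Fin n → Fin j) :
    val j n (fun m => (ew hj w m : ℕ)) = (finFunctionFinEquiv w : ℕ) := by
  rw [finFunctionFinEquiv_apply, val, Finset.sum_range (fun m => _)]
  apply Finset.sum_congr rfl
  intro i _
  simp [ew, i.isLt]

lemma card_filter_fin_lt (M : ℕ) (c : Fin M) :
    ((Finset.univ.filter (fun m : Fin M => m < c)).card = (c : ℕ)) := by
  have himg : (Finset.univ.filter (fun m : Fin M => m < c)).image Fin.val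
      = Finset.range (c : ℕ) := by
    ext a
    simp only [Finset.mem_image, Finset.mem_filter, Finset.mem_univ, true_and,
      Finset.mem_range]
    constructor
    · rintro ⟨m, hm, rfl⟩; exact hm
    · intro ha
      exact ⟨⟨a, lt_trans ha c.isLt⟩, by simpa [Fin.lt_def] using ha, rfl⟩
  rw [← Finset.card_range (c : ℕ), ← himg,
    Finset.card_image_of_injective _ Fin.val_injective]

lemma card_lt_eq (hι : StrictMono ι) (hj : 0 < j) (ht : 1 ≤ t) (u : Fin n → Fin j) :
    ((Finset.univ.filter (fun w : Fin n → Fin j =>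
      val t n (fun m => (ι (ew hj w m) : ℕ)) < val t n (fun m => (ι (ew hj u m) : ℕ)))).card)
      = (finFunctionFinEquiv u : ℕ) := by
  have hcong : ∀ w : Fin n → Fin j,
      (val t n (fun m => (ι (ew hj w m) : ℕ)) < val t n (fun m => (ι (ew hj u m) : ℕ)))
        ↔ finFunctionFinEquiv w < finFunctionFinEquiv u := by
    intro w
    rw [val_transport hι hj ht, val_nw_eq, val_nw_eq, Fin.lt_def]
  rw [Finset.filter_congr (fun w _ => by rw [hcong w])]
  rw [← card_filter_fin_lt _ (finFunctionFinEquiv u)]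
  apply Finset.card_bij (fun w _ => finFunctionFinEquiv w)
  · intro w hw
    simpa using (Finset.mem_filter.1 hw).2
  · intro w1 h1 w2 h2 he
    exact finFunctionFinEquiv.injective he
  · intro m hm
    refine ⟨finFunctionFinEquiv.symm m, ?_, by simp⟩
    simp only [Finset.mem_filter, Finset.mem_univ, true_and, Equiv.apply_symm_apply]
    simpa using (Finset.mem_filter.1 hm).2

lemma succ_card (hι : StrictMono ι) (hj : 0 < j) (ht : 1 ≤ t) (u v : Fin n → Fin j)
    (h : val t n (fun m => (ι (ew hj v m) : ℕ)) = val t n (fun m => (ι (ew hj u m) : ℕ)) + 1) :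
    (finFunctionFinEquiv v : ℕ) = (finFunctionFinEquiv u : ℕ) + 1 := by
  rw [← card_lt_eq hι hj ht u, ← card_lt_eq hι hj ht v]
  have hset : (Finset.univ.filter (fun w : Fin n → Fin j =>
        val t n (fun m => (ι (ew hj w m) : ℕ)) < val t n (fun m => (ι (ew hj v m) : ℕ))))
      = insert u (Finset.univ.filter (fun w : Fin n → Fin j =>
        val t n (fun m => (ι (ew hj w m) : ℕ)) < val t n (fun m => (ι (ew hj u m) : ℕ)))) := by
    ext w
    simp only [Finset.mem_filter, Finset.mem_univ, true_and, Finset.mem_insert]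
    rw [h]
    constructor
    · intro hw
      rcases Nat.lt_succ_iff_lt_or_eq.1 hw with h1 | h2
      · exact Or.inr h1
      · left
        have hdig := val_eq_digits ht (fun m _ => (ι (ew hj w m)).isLt)
          (fun m _ => (ι (ew hj u m)).isLt) h2
        funext i
        have := hdig i.val i.isLt
        have h3 : ι (ew hj w i.val) = ι (ew hj u i.val) := Fin.val_injective this
        have h4 : ew hj w i.val = ew hj u i.val := hι.injective h3
        simpa [ew, i.isLt] using h4
    · rintro (rfl | hw)
      · omega
      · omega
  rw [hset, Finset.card_insert_of_notMem (by simp)]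
end transport
-- chunk 5: reflect lemma, decomposition, gap, g_diff
lemma sum_div_pow_reflect {T : ℕ} (hT : 2 ≤ T) (c : ℕ → ℕ) (N B : ℕ) :
    ∑ i ∈ Finset.range N, (c i : ℝ) / (T:ℝ)^(B + i + 1)
      = (val T N (fun m => c (N - 1 - m)) : ℝ) / (T:ℝ)^(B + N) := by
  have hT0 := Tpos hT
  rw [← Finset.sum_range_reflect]
  rw [val]
  push_cast
  rw [Finset.sum_div]
  apply Finset.sum_congr rfl
  intro m hm
  have hmN : m < N := Finset.mem_range.1 hm
  rw [div_eq_div_iff (by positivity) (by positivity), mul_assoc, ← pow_add]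
  congr 2
  omega

lemma ex_decomp {T : ℕ} (hT : 2 ≤ T) (a : ℕ → ℕ) (ha : ∀ n, a n < T) (n : ℕ) :
    ex T a = ((val T n (fun m => a (n - 1 - m)) : ℕ) : ℝ) / (T:ℝ)^n
      + ∑' m : ℕ, (a (m + n) : ℝ) / (T:ℝ)^((m + n) + 1) := by
  rw [ex_split hT a ha n]
  congr 1
  have := sum_div_pow_reflect hT a n 0
  simpa using this

lemma nat_gap {A B : ℕ} (h : |(A:ℝ) - (B:ℝ)| < 2) : A = B ∨ A = B + 1 ∨ B = A + 1 := by
  have h1 : (A:ℝ) - B < 2 := (abs_lt.1 h).2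
  have h2 : (B:ℝ) - A < 2 := by have := (abs_lt.1 h).1; linarith
  have h3 : A < B + 2 := by exact_mod_cast (by push_cast; linarith : (A:ℝ) < (B:ℝ) + 2)
  have h4 : B < A + 2 := by exact_mod_cast (by push_cast; linarith : (B:ℝ) < (A:ℝ) + 2)
  omega

section gdiff
variable {j t : ℕ} {ι : Fin j → Fin t}

lemma adm_comp (hι : StrictMono ι) (hj : 2 ≤ j) (ht : 2 ≤ t) {e : ℕ → Fin j}
    (he : Adm j (fun n => (e n : ℕ))) : Adm t (fun n => (ι (e n) : ℕ)) := by
  rintro ⟨N, hN⟩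
  apply he
  refine ⟨N, fun n hn => ?_⟩
  -- e n must be j - 1
  have hval : (ι (e n) : ℕ) = t - 1 := hN n hn
  by_contra hne
  have hne' : (e n : ℕ) ≠ j - 1 := hne
  have hlt : e n < (⟨j - 1, by omega⟩ : Fin j) := by
    rw [Fin.lt_def]
    have := (e n).isLt
    exact (by omega : (e n : ℕ) < j - 1)
  have := hι hlt
  have h2 : (ι (e n) : ℕ) < (ι ⟨j - 1, by omega⟩ : ℕ) := this
  have h3 : (ι ⟨j - 1, by omega⟩ : ℕ) < t := (ι _).isLt
  omega

lemma g_diff_succ (hι : StrictMono ι) (hj : 2 ≤ j) (ht : 2 ≤ t)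
    (e f : ℕ → Fin j) (n : ℕ)
    (hsucc : val t n (fun m => ((ι (f (n - 1 - m))) : ℕ))
      = val t n (fun m => ((ι (e (n - 1 - m))) : ℕ)) + 1) :
    |ex j (fun m => (e m : ℕ)) - ex j (fun m => (f m : ℕ))| ≤ 2 * ((1:ℝ)/j)^n := by
  have hj0 : (0:ℝ) < j := Tpos hj
  have hj1 : (0:ℕ) < j := by omega
  -- words
  set u : Fin n → Fin j := fun i => e (n - 1 - (i : ℕ)) with hu
  set v : Fin n → Fin j := fun i => f (n - 1 - (i : ℕ)) with hv
  have hcu : ∀ m < n, (ι (ew hj1 u m) : ℕ) = (ι (e (n - 1 - m)) : ℕ) := by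
    intro m hm; simp [ew, hm, hu]
  have hcv : ∀ m < n, (ι (ew hj1 v m) : ℕ) = (ι (f (n - 1 - m)) : ℕ) := by
    intro m hm; simp [ew, hm, hv]
  have hsucc' : val t n (fun m => (ι (ew hj1 v m) : ℕ))
      = val t n (fun m => (ι (ew hj1 u m) : ℕ)) + 1 := by
    rw [val_congr hcu, val_congr hcv]; exact hsucc
  have hE := succ_card hι hj1 (by omega) u v hsucc'
  -- base-j prefix values
  have hRu : val j n (fun m => (e (n - 1 - m) : ℕ)) = (finFunctionFinEquiv u : ℕ) := by
    rw [← val_nw_eq hj1 u]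
    apply val_congr
    intro m hm; simp [ew, hm, hu]
  have hRv : val j n (fun m => (f (n - 1 - m) : ℕ)) = (finFunctionFinEquiv v : ℕ) := by
    rw [← val_nw_eq hj1 v]
    apply val_congr
    intro m hm; simp [ew, hm, hv]
  have hde : ∀ m, (e m : ℕ) < j := fun m => (e m).isLt
  have hdf : ∀ m, (f m : ℕ) < j := fun m => (f m).isLt
  have hxe := ex_decomp hj (fun m => (e m : ℕ)) hde n
  have hxf := ex_decomp hj (fun m => (f m : ℕ)) hdf n
  have hse0 := tail_nonneg hj (fun m => (e m : ℕ)) n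
  have hse1 := tail_le hj (fun m => (e m : ℕ)) hde n
  have hsf0 := tail_nonneg hj (fun m => (f m : ℕ)) n
  have hsf1 := tail_le hj (fun m => (f m : ℕ)) hdf n
  have hRvRu : (val j n (fun m => (f (n - 1 - m) : ℕ)) : ℝ)
      = (val j n (fun m => (e (n - 1 - m) : ℕ)) : ℝ) + 1 := by
    rw [hRu, hRv]
    exact_mod_cast congrArg (Nat.cast (R := ℝ)) (by rw [hE])
  have hpow : ((1:ℝ)/j)^n = 1/(j:ℝ)^n := by rw [div_pow, one_pow]
  rw [hxe, hxf, abs_le]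
  constructor
  · rw [hRvRu]
    have : ((val j n (fun m => (e (n-1-m) : ℕ)) : ℝ) + 1) / (j:ℝ)^n
        = (val j n (fun m => (e (n-1-m) : ℕ)) : ℝ) / (j:ℝ)^n + ((1:ℝ)/j)^n := by
      rw [hpow, ← add_div]
    rw [this]
    have h1 : ((1:ℝ)/j)^n ≥ 0 := by positivity
    linarith
  · rw [hRvRu]
    have : ((val j n (fun m => (e (n-1-m) : ℕ)) : ℝ) + 1) / (j:ℝ)^n
        = (val j n (fun m => (e (n-1-m) : ℕ)) : ℝ) / (j:ℝ)^n + ((1:ℝ)/j)^n := by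
      rw [hpow, ← add_div]
    rw [this]
    linarith

lemma g_diff (hι : StrictMono ι) (hj : 2 ≤ j) (ht : 2 ≤ t)
    (e f : ℕ → Fin j)
    (he : Adm t (fun m => (ι (e m) : ℕ))) (hf : Adm t (fun m => (ι (f m) : ℕ))) (n : ℕ)
    (hxy : |ex t (fun m => (ι (e m) : ℕ)) - ex t (fun m => (ι (f m) : ℕ))| < ((1:ℝ)/t)^n) :
    |ex j (fun m => (e m : ℕ)) - ex j (fun m => (f m : ℕ))| ≤ 2 * ((1:ℝ)/j)^n := by
  have ht0 := Tpos ht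
  have hj0 := Tpos hj
  have hpn : (0:ℝ) < (t:ℝ)^n := by positivity
  have hde : ∀ m, (ι (e m) : ℕ) < t := fun m => (ι (e m)).isLt
  have hdf : ∀ m, (ι (f m) : ℕ) < t := fun m => (ι (f m)).isLt
  set Ve := val t n (fun m => ((ι (e (n - 1 - m))) : ℕ)) with hVe
  set Vf := val t n (fun m => ((ι (f (n - 1 - m))) : ℕ)) with hVf
  set x := ex t (fun m => (ι (e m) : ℕ)) with hx
  set y := ex t (fun m => (ι (f m) : ℕ)) with hy
  set te := ∑' m : ℕ, ((ι (e (m + n)) : ℕ) : ℝ) / (t:ℝ)^((m + n) + 1) with hte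
  set tf := ∑' m : ℕ, ((ι (f (m + n)) : ℕ) : ℝ) / (t:ℝ)^((m + n) + 1) with htf
  have hxe : x = (Ve:ℝ)/(t:ℝ)^n + te := ex_decomp ht (fun m => (ι (e m) : ℕ)) hde n
  have hxf : y = (Vf:ℝ)/(t:ℝ)^n + tf := ex_decomp ht (fun m => (ι (f m) : ℕ)) hdf n
  have hte0 : 0 ≤ te := tail_nonneg ht (fun m => (ι (e m) : ℕ)) n
  have hte1 : te < ((1:ℝ)/t)^n := tail_lt ht (fun m => (ι (e m) : ℕ)) hde he n
  have htf0 : 0 ≤ tf := tail_nonneg ht (fun m => (ι (f m) : ℕ)) n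
  have htf1 : tf < ((1:ℝ)/t)^n := tail_lt ht (fun m => (ι (f m) : ℕ)) hdf hf n
  have hpowt : ((1:ℝ)/t)^n = 1/(t:ℝ)^n := by rw [div_pow, one_pow]
  have hgap : |(Ve:ℝ) - (Vf:ℝ)| < 2 := by
    have hA : ((Ve:ℝ) - Vf)/(t:ℝ)^n = (x - y) - (te - tf) := by
      rw [hxe, hxf]; ring
    have h1 : |((Ve:ℝ)-Vf)/(t:ℝ)^n| < 2 * (1/(t:ℝ)^n) := by
      rw [hA]
      calc |(x - y) - (te - tf)| ≤ |x - y| + |te - tf| := abs_sub _ _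
        _ < ((1:ℝ)/t)^n + ((1:ℝ)/t)^n := by
            apply add_lt_add hxy
            rw [abs_lt]
            constructor <;> [linarith [hpowt ▸ hte1]; linarith [hpowt ▸ htf1]]
        _ = 2 * (1/(t:ℝ)^n) := by rw [hpowt]; ring
    have h2 : |(Ve:ℝ)-Vf| = |((Ve:ℝ)-Vf)/(t:ℝ)^n| * (t:ℝ)^n := by
      rw [abs_div, abs_of_pos hpn]
      field_simp
    rw [h2]
    calc |((Ve:ℝ)-Vf)/(t:ℝ)^n| * (t:ℝ)^n < (2 * (1/(t:ℝ)^n)) * (t:ℝ)^n :=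
          mul_lt_mul_of_pos_right h1 hpn
      _ = 2 := by field_simp
  rcases nat_gap hgap with hc | hc | hc
  · -- equal prefixes
    have hdig := val_eq_digits (by omega : 1 ≤ t)
      (fun m _ => (ι (e (n-1-m))).isLt) (fun m _ => (ι (f (n-1-m))).isLt) hc
    have hdig' : ∀ m' < n, (e m' : ℕ) = (f m' : ℕ) := by
      intro m' hm'
      have h := hdig (n - 1 - m') (by omega)
      have hidx : n - 1 - (n - 1 - m') = m' := by omega
      rw [hidx] at h
      have : ι (e m') = ι (f m') := Fin.val_injective h
      exact congrArg Fin.val (hι.injective this)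
    have hRe : val j n (fun m => (e (n-1-m) : ℕ)) = val j n (fun m => (f (n-1-m) : ℕ)) :=
      val_congr (fun m hm => hdig' (n-1-m) (by omega))
    have hge := ex_decomp hj (fun m => (e m : ℕ)) (fun m => (e m).isLt) n
    have hgf := ex_decomp hj (fun m => (f m : ℕ)) (fun m => (f m).isLt) n
    have hs0 := tail_nonneg hj (fun m => (e m : ℕ)) n
    have hs1 := tail_le hj (fun m => (e m : ℕ)) (fun m => (e m).isLt) n
    have hs0' := tail_nonneg hj (fun m => (f m : ℕ)) n
    have hs1' := tail_le hj (fun m => (f m : ℕ)) (fun m => (f m).isLt) n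
    rw [hge, hgf, hRe]
    have hjn : (0:ℝ) ≤ ((1:ℝ)/j)^n := by positivity
    rw [abs_le]
    constructor <;> [linarith; linarith]
  · -- Ve = Vf + 1 : swap
    rw [abs_sub_comm]
    exact g_diff_succ hι hj ht f e n hc
  · exact g_diff_succ hι hj ht e f n hc

end gdiff

section cantor
open Real in
noncomputable def dexp (j t : ℕ) : ℝ := Real.log j / Real.log t

lemma dexp_pos {j t : ℕ} (hj : 2 ≤ j) (ht : 2 ≤ t) : 0 < dexp j t := by
  apply div_pos
  · exact Real.log_pos (by exact_mod_cast hj.trans_lt' one_lt_two)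
  · exact Real.log_pos (by exact_mod_cast ht.trans_lt' one_lt_two)

lemma rpow_key {j t : ℕ} (hj : 2 ≤ j) (ht : 2 ≤ t) (m : ℕ) :
    (((1:ℝ)/t)^m) ^ (dexp j t) = ((1:ℝ)/j)^m := by
  have ht0 := Tpos ht
  have hj0 := Tpos hj
  have hlogt : Real.log t ≠ 0 := ne_of_gt (Real.log_pos (by exact_mod_cast ht.trans_lt' one_lt_two))
  have h1 : (((1:ℝ)/t)^m) ^ (dexp j t)
      = Real.exp (((m : ℝ) * Real.log ((1:ℝ)/t)) * dexp j t) := by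
    rw [Real.rpow_def_of_pos (by positivity), Real.log_pow]
  have h2 : ((1:ℝ)/j)^m = Real.exp ((m:ℝ) * Real.log ((1:ℝ)/j)) := by
    rw [← Real.log_pow, Real.exp_log (by positivity)]
  rw [h1, h2]
  congr 1
  rw [one_div, one_div, Real.log_inv, Real.log_inv]
  rw [dexp]
  field_simp

variable {j t : ℕ} {ι : Fin j → Fin t}

/-- points coded by admissible base-`j` sequences through `ι`. -/
def E0 (ι : Fin j → Fin t) : Set ℝ :=
  {x | ∃ e : ℕ → Fin j, Adm j (fun n => (e n : ℕ)) ∧ x = ex t (fun n => (ι (e n) : ℕ))}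

open Classical in
/-- the "Cantor function" (coding map). -/
noncomputable def gmap (ι : Fin j → Fin t) : ℝ → ℝ := fun x =>
  if h : x ∈ E0 ι then ex j (fun n => ((h.choose n : ℕ))) else 0

lemma gmap_spec {x : ℝ} (h : x ∈ E0 ι) :
    ∃ e : ℕ → Fin j, Adm j (fun n => (e n : ℕ)) ∧ x = ex t (fun n => (ι (e n) : ℕ)) ∧
      gmap ι x = ex j (fun n => (e n : ℕ)) := by
  classical
  refine ⟨h.choose, h.choose_spec.1, h.choose_spec.2, ?_⟩
  simp only [gmap, dif_pos h]

lemma gmap_surj (hι : StrictMono ι) (hj : 2 ≤ j) (ht : 2 ≤ t) :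
    Ico (0:ℝ) 1 ⊆ gmap ι '' (E0 ι) := by
  rintro y ⟨hy0, hy1⟩
  obtain ⟨a, ha, hadm, hex⟩ := exists_digits hj y hy0 hy1
  set e : ℕ → Fin j := fun n => ⟨a n, ha n⟩ with he_def
  have hcoe : (fun n => (e n : ℕ)) = a := rfl
  have hadm' : Adm j (fun n => (e n : ℕ)) := by rw [hcoe]; exact hadm
  set x := ex t (fun n => (ι (e n) : ℕ)) with hx_def
  have hxE : x ∈ E0 ι := ⟨e, hadm', rfl⟩
  refine ⟨x, hxE, ?_⟩
  obtain ⟨e', hadm'', hx', hg⟩ := gmap_spec hxE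
  have hseq : (fun n => ((ι (e' n)) : ℕ)) = (fun n => ((ι (e n)) : ℕ)) :=
    ex_inj ht (fun n => (ι (e' n)).isLt) (fun n => (ι (e n)).isLt)
      (adm_comp hι hj ht hadm'') (adm_comp hι hj ht hadm') hx'.symm
  have hee : e' = e := by
    funext n
    have := congrFun hseq n
    exact hι.injective (Fin.val_injective this)
  rw [hg, hee, hcoe, hex]

lemma gmap_holder (hι : StrictMono ι) (hj : 2 ≤ j) (ht : 2 ≤ t) :
    HolderOnWith ((2 * j : ℕ) : ℝ≥0) (Real.toNNReal (dexp j t)) (gmap ι) (E0 ι) := by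
  intro x hx y hy
  rcases eq_or_ne x y with rfl | hne
  · simp
  obtain ⟨e, hadme, hxe, hge⟩ := gmap_spec hx
  obtain ⟨f, hadmf, hyf, hgf⟩ := gmap_spec hy
  have ht0 := Tpos ht
  have hj0 := Tpos hj
  have h1t : (1:ℝ)/t < 1 := by
    rw [div_lt_one ht0]; exact_mod_cast ht.trans_lt' one_lt_two
  set r := |x - y| with hr_def
  have hr0 : 0 < r := abs_pos.2 (sub_ne_zero.2 hne)
  have hr1 : r < 1 := by
    have hx0 : 0 ≤ x := hxe ▸ ex_nonneg ht _
    have hy0 : 0 ≤ y := hyf ▸ ex_nonneg ht _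
    have hx1 : x < 1 := hxe ▸ ex_lt_one ht _ (fun n => (ι (e n)).isLt) (adm_comp hι hj ht hadme)
    have hy1 : y < 1 := hyf ▸ ex_lt_one ht _ (fun n => (ι (f n)).isLt) (adm_comp hι hj ht hadmf)
    rw [hr_def, abs_lt]; constructor <;> linarith
  have hPex : ∃ n : ℕ, ((1:ℝ)/t)^n ≤ r := by
    obtain ⟨n, hn⟩ := exists_pow_lt_of_lt_one hr0 h1t
    exact ⟨n, hn.le⟩
  classical
  set n₀ := Nat.find hPex with hn₀_def
  have hn₀ : ((1:ℝ)/t)^n₀ ≤ r := Nat.find_spec hPex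
  have hn₀pos : 0 < n₀ := by
    rcases Nat.eq_zero_or_pos n₀ with h | h
    · exfalso; rw [h] at hn₀; simp at hn₀; linarith
    · exact h
  have hlt : r < ((1:ℝ)/t)^(n₀ - 1) := by
    have := Nat.find_min hPex (m := n₀ - 1) (by omega)
    push_neg at this
    exact this
  have hgd := g_diff hι hj ht e f (adm_comp hι hj ht hadme) (adm_comp hι hj ht hadmf)
    (n₀ - 1) (by rw [← hxe, ← hyf]; exact hlt)
  -- convert to distance bound
  have hd0 : 0 ≤ dexp j t := (dexp_pos hj ht).le
  have hkey : ((1:ℝ)/j)^(n₀ - 1) = (j:ℝ) * ((1:ℝ)/j)^n₀ := by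
    have : n₀ = (n₀ - 1) + 1 := by omega
    rw [this]
    rw [pow_succ]
    field_simp
    rw [Nat.add_sub_cancel]
  have hrp : ((1:ℝ)/j)^n₀ = (((1:ℝ)/t)^n₀) ^ (dexp j t) := (rpow_key hj ht n₀).symm
  have hmono : (((1:ℝ)/t)^n₀) ^ (dexp j t) ≤ r ^ (dexp j t) :=
    Real.rpow_le_rpow (by positivity) hn₀ hd0
  have hfinal : |gmap ι x - gmap ι y| ≤ 2 * j * r ^ (dexp j t) := by
    rw [hge, hgf]
    calc |ex j (fun n => (e n : ℕ)) - ex j (fun n => (f n : ℕ))| ≤ 2 * ((1:ℝ)/j)^(n₀-1) := hgd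
      _ = 2 * j * ((1:ℝ)/j)^n₀ := by rw [hkey]; ring
      _ ≤ 2 * j * r ^ (dexp j t) := by
          apply mul_le_mul_of_nonneg_left (hrp ▸ hmono) (by positivity)
  -- edist form
  rw [edist_dist, edist_dist]
  have hdistxy : dist x y = r := by rw [Real.dist_eq]
  rw [hdistxy]
  have hco : ((Real.toNNReal (dexp j t)) : ℝ) = dexp j t := Real.coe_toNNReal _ hd0
  rw [ENNReal.ofReal_rpow_of_pos hr0, hco]
  have hC : (((2 * j : ℕ) : ℝ≥0) : ℝ≥0∞) = ENNReal.ofReal ((2 * j : ℕ) : ℝ) := by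
    rw [ENNReal.ofReal_natCast]
    simp
  rw [hC, ← ENNReal.ofReal_mul (by positivity)]
  apply ENNReal.ofReal_le_ofReal
  calc dist (gmap ι x) (gmap ι y) = |gmap ι x - gmap ι y| := Real.dist_eq _ _
    _ ≤ 2 * j * r ^ (dexp j t) := hfinal
    _ = ((2 * j : ℕ) : ℝ) * (r ^ (dexp j t)) := by push_cast; ring

end cantor

section dim
open MeasureTheory
variable {j t : ℕ} {ι : Fin j → Fin t}

lemma cantor_lower (hι : StrictMono ι) (hj : 2 ≤ j) (ht : 2 ≤ t) :
    ENNReal.ofReal (dexp j t) ≤ dimH (E0 ι) := by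
  have hd := dexp_pos hj ht
  have hH := (gmap_holder hι hj ht).dimH_image_le (Real.toNNReal_pos.2 hd)
  have h1 : dimH (Ico (0:ℝ) 1) = 1 := by
    rw [Real.dimH_of_mem_nhds (x := (1/2 : ℝ))
      (mem_of_superset (Ioo_mem_nhds (by norm_num) (by norm_num)) Ioo_subset_Ico_self)]
    simp
  have h2 : (1:ℝ≥0∞) ≤ dimH (gmap ι '' E0 ι) := by
    rw [← h1]; exact dimH_mono (gmap_surj hι hj ht)
  have h3 : (1:ℝ≥0∞) ≤ dimH (E0 ι) / ((Real.toNNReal (dexp j t) : ℝ≥0∞)) := le_trans h2 hH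
  have hne0 : ((Real.toNNReal (dexp j t)) : ℝ≥0∞) ≠ 0 := by
    simp only [ne_eq, ENNReal.coe_eq_zero, Real.toNNReal_eq_zero, not_le]
    linarith
  have hnetop : ((Real.toNNReal (dexp j t)) : ℝ≥0∞) ≠ ⊤ := ENNReal.coe_ne_top
  have h4 := (ENNReal.le_div_iff_mul_le (Or.inl hne0) (Or.inl hnetop)).1 h3
  rw [one_mul] at h4
  exact h4

lemma cantor_upper (hι : StrictMono ι) (hj : 2 ≤ j) (ht : 2 ≤ t) :
    dimH {x : ℝ | ∃ e : ℕ → Fin j, x = ex t (fun n => (ι (e n) : ℕ))}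
      ≤ ENNReal.ofReal (dexp j t) := by
  have hj1 : 0 < j := by omega
  have ht0 := Tpos ht
  have hd := dexp_pos hj ht
  set d := dexp j t with hd_def
  set Eall := {x : ℝ | ∃ e : ℕ → Fin j, x = ex t (fun n => (ι (e n) : ℕ))} with hE_def
  set cw : ∀ n : ℕ, (Fin n → Fin j) → ℝ := fun n w =>
    ∑ m ∈ Finset.range n, ((ι (ew hj1 w m) : ℕ) : ℝ)/(t:ℝ)^(m+1) with hcw_def
  have hμ : μH[d] Eall ≤ 1 := by
    have hmain := MeasureTheory.Measure.hausdorffMeasure_le_liminf_sum (ι := fun n : ℕ => Fin n → Fin j) d Eall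
      (l := atTop) (r := fun n => ENNReal.ofReal (((1:ℝ)/t)^n))
      (by
        rw [show (0:ℝ≥0∞) = ENNReal.ofReal 0 by simp]
        apply ENNReal.tendsto_ofReal
        apply tendsto_pow_atTop_nhds_zero_of_lt_one (by positivity)
        rw [div_lt_one ht0]; exact_mod_cast ht.trans_lt' one_lt_two)
      (fun n w => Icc (cw n w) (cw n w + ((1:ℝ)/t)^n))
      (by
        apply Filter.Eventually.of_forall
        intro n w
        rw [Real.ediam_Icc, add_sub_cancel_left])
      (by
        apply Filter.Eventually.of_forall
        intro n x hx
        obtain ⟨e, rfl⟩ := hx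
        rw [mem_iUnion]
        refine ⟨fun i => e (i : ℕ), ?_⟩
        have hde : ∀ m, ((ι (e m)) : ℕ) < t := fun m => (ι (e m)).isLt
        have hpre : cw n (fun i => e (i : ℕ))
            = ∑ m ∈ Finset.range n, ((ι (e m) : ℕ) : ℝ)/(t:ℝ)^(m+1) := by
          apply Finset.sum_congr rfl
          intro m hm
          have hmn := Finset.mem_range.1 hm
          simp [ew, hmn]
        have hsplit := ex_split ht (fun m => ((ι (e m)) : ℕ)) hde n
        have h0 := tail_nonneg ht (fun m => ((ι (e m)) : ℕ)) n
        have h1 := tail_le ht (fun m => ((ι (e m)) : ℕ)) hde n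
        constructor
        · rw [hpre, hsplit]; linarith
        · rw [hpre, hsplit]; linarith)
    have hsum : ∀ n : ℕ, (∑ w : Fin n → Fin j,
        Metric.ediam (Icc (cw n w) (cw n w + ((1:ℝ)/t)^n)) ^ d) = 1 := by
      intro n
      have hterm : ∀ w : Fin n → Fin j,
          Metric.ediam (Icc (cw n w) (cw n w + ((1:ℝ)/t)^n)) ^ d
            = ENNReal.ofReal (((1:ℝ)/j)^n) := by
        intro w
        rw [Real.ediam_Icc, add_sub_cancel_left,
          ENNReal.ofReal_rpow_of_pos (by positivity), rpow_key hj ht n]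
      rw [Finset.sum_congr rfl (fun w _ => hterm w), Finset.sum_const, Finset.card_univ]
      have hcard : Fintype.card (Fin n → Fin j) = j ^ n := by
        rw [Fintype.card_fun]; simp
      rw [hcard, nsmul_eq_mul]
      have hc1 : ((j ^ n : ℕ) : ℝ≥0∞) = ENNReal.ofReal ((j:ℝ)^n) := by
        rw [← ENNReal.ofReal_natCast]
        congr 1
        push_cast
        ring
      rw [hc1, ← ENNReal.ofReal_mul (by positivity)]
      rw [show ((j:ℝ)^n * ((1:ℝ)/j)^n) = 1 by
        rw [div_pow, one_pow]
        field_simp]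
      exact ENNReal.ofReal_one
    calc μH[d] Eall ≤ _ := hmain
      _ = 1 := by
        rw [Filter.liminf_congr (Filter.Eventually.of_forall hsum)]
        exact Filter.liminf_const 1
  have hne : μH[((Real.toNNReal d : ℝ≥0) : ℝ)] Eall ≠ ⊤ := by
    rw [Real.coe_toNNReal _ hd.le]
    exact ne_top_of_le_ne_top ENNReal.one_ne_top hμ
  exact dimH_le_of_hausdorffMeasure_ne_top hne

lemma cantor_dimH (hι : StrictMono ι) (hj : 2 ≤ j) (ht : 2 ≤ t) :
    dimH {x : ℝ | ∃ e : ℕ → Fin j, Adm t (fun n => (ι (e n) : ℕ))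
        ∧ x = ex t (fun n => (ι (e n) : ℕ))}
      = ENNReal.ofReal (dexp j t) := by
  apply le_antisymm
  · refine le_trans (dimH_mono ?_) (cantor_upper hι hj ht)
    rintro x ⟨e, _, hx⟩
    exact ⟨e, hx⟩
  · refine le_trans (cantor_lower hι hj ht) (dimH_mono ?_)
    rintro x ⟨e, hadm, hx⟩
    exact ⟨e, adm_comp hι hj ht hadm, hx⟩
end dim

section blocks
variable {s k : ℕ}

def bc (k s : ℕ) (b : Fin k → Fin s) : ℕ → ℕ := fun i => if h : i < k then (b ⟨i, h⟩ : ℕ) else 0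

def concat (k s : ℕ) (b : ℕ → (Fin k → Fin s)) : ℕ → ℕ := fun n => bc k s (b (n / k)) (n % k)

def wv (k s : ℕ) (b : Fin k → Fin s) : ℕ := val s k (fun m => bc k s b (k - 1 - m))

lemma bc_lt (hs : 2 ≤ s) (b : Fin k → Fin s) (i : ℕ) : bc k s b i < s := by
  unfold bc
  split
  · exact (b _).isLt
  · omega

lemma wv_lt (hs : 2 ≤ s) (b : Fin k → Fin s) : wv k s b < s ^ k :=
  val_lt_pow (by omega) (fun m _ => bc_lt hs b _)

lemma wv_inj (hs : 2 ≤ s) {b b' : Fin k → Fin s} (h : wv k s b = wv k s b') : b = b' := by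
  have hd := val_eq_digits (by omega : 1 ≤ s) (fun m _ => bc_lt hs b _)
    (fun m _ => bc_lt hs b' _) h
  funext i
  have hik := i.isLt
  have := hd (k - 1 - (i : ℕ)) (by omega)
  have hidx : k - 1 - (k - 1 - (i : ℕ)) = (i : ℕ) := by omega
  rw [hidx] at this
  simp only [bc, dif_pos hik] at this
  exact Fin.val_injective (by simpa using this)

lemma val_allmax (T N : ℕ) (hT : 1 ≤ T) : val T N (fun _ => T - 1) = T ^ N - 1 := by
  induction N with
  | zero => simp [val]
  | succ N ih =>
    have h1 : (1:ℕ) ≤ T ^ N := Nat.one_le_pow _ _ (by omega)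
    have h2 : T ^ (N+1) = T * T ^ N := pow_succ' T N
    have : val T (N+1) (fun _ => T - 1) = val T N (fun _ => T - 1) + (T - 1) * T ^ N :=
      Finset.sum_range_succ _ _
    have h4 : T ^ N ≤ T * T ^ N := Nat.le_mul_of_pos_left _ (by omega)
    rw [this, ih, h2, Nat.sub_mul, one_mul]
    omega

lemma wv_maxblock (hs : 2 ≤ s) (hk : 1 ≤ k) :
    wv k s (fun _ => (⟨s - 1, Nat.sub_one_lt_of_lt hs⟩ : Fin s)) = s ^ k - 1 := by
  unfold wv
  rw [val_congr (c := fun _ => s - 1) (fun m hm => by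
    simp [bc, (by omega : k - 1 - m < k)])]
  exact val_allmax s k (by omega)

set_option maxHeartbeats 1000000 in
lemma ex_concat (hs : 2 ≤ s) (hk : 1 ≤ k) (b : ℕ → (Fin k → Fin s)) :
    ex s (concat k s b) = ex (s ^ k) (fun m => wv k s (b m)) := by
  haveI : NeZero k := ⟨by omega⟩
  have hs0 := Tpos hs
  have hdig : ∀ n, concat k s b n < s := fun n => bc_lt hs _ _
  have hsumm : Summable (fun n => ((concat k s b n : ℕ) : ℝ) / (s:ℝ) ^ (n+1)) :=
    summable_ex hs _ hdig
  set f : ℕ → ℝ := fun n => ((concat k s b n : ℕ) : ℝ) / (s:ℝ) ^ (n+1) with hf_def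
  have he := Equiv.tsum_eq (Nat.divModEquiv k).symm f
  have hsumm' : Summable (fun p : ℕ × Fin k => f ((Nat.divModEquiv k).symm p)) :=
    (Equiv.summable_iff (Nat.divModEquiv k).symm).2 hsumm
  have hterm : ∀ (m : ℕ) (i : Fin k),
      f ((Nat.divModEquiv k).symm (m, i)) = (bc k s (b m) i : ℝ) / (s:ℝ) ^ (m * k + (i:ℕ) + 1) := by
    intro m i
    have hdiv : (m * k + (i:ℕ)) / k = m := by
      rw [Nat.add_comm, Nat.add_mul_div_right _ _ (by omega : 0 < k),
        Nat.div_eq_of_lt i.isLt, Nat.zero_add]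
    have hmod : (m * k + (i:ℕ)) % k = (i:ℕ) := by
      rw [Nat.add_comm, Nat.add_mul_mod_self_right, Nat.mod_eq_of_lt i.isLt]
    simp only [hf_def, Nat.divModEquiv, Equiv.coe_fn_symm_mk, concat, hdiv, hmod]
  calc ex s (concat k s b) = ∑' p : ℕ × Fin k, f ((Nat.divModEquiv k).symm p) := he.symm
    _ = ∑' m : ℕ, ∑' i : Fin k, f ((Nat.divModEquiv k).symm (m, i)) := Summable.tsum_prod' hsumm'
        (fun m => hsumm'.prod_factor m)
    _ = ∑' m : ℕ, ((wv k s (b m) : ℕ) : ℝ) / ((s:ℝ)^k) ^ (m + 1) := by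
        apply tsum_congr
        intro m
        rw [tsum_congr (hterm m), tsum_fintype]
        have hrefl := sum_div_pow_reflect hs (bc k s (b m)) k (m * k)
        rw [← Finset.sum_range (fun i => (bc k s (b m) i : ℝ) / (s:ℝ) ^ (m * k + i + 1)), hrefl]
        have hpow : (s:ℝ) ^ (m * k + k) = ((s:ℝ)^k) ^ (m+1) := by
          rw [← pow_mul]
          congr 1
          ring
        rw [hpow]
        rfl
    _ = ex (s ^ k) (fun m => wv k s (b m)) := by
        unfold ex
        apply tsum_congr
        intro m
        congr 1
        push_cast
        ring

lemma adm_concat_iff (hs : 2 ≤ s) (hk : 1 ≤ k) (b : ℕ → (Fin k → Fin s)) :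
    Adm s (concat k s b) ↔ Adm (s ^ k) (fun m => wv k s (b m)) := by
  have hmax : ∀ m : ℕ, wv k s (b m) = s ^ k - 1 ↔ b m = (fun _ => (⟨s - 1, Nat.sub_one_lt_of_lt hs⟩ : Fin s)) := by
    intro m
    constructor
    · intro h
      apply wv_inj hs
      rw [h, wv_maxblock hs hk]
    · intro h
      rw [h, wv_maxblock hs hk]
  unfold Adm
  apply not_congr
  constructor
  · rintro ⟨N, hN⟩
    refine ⟨N, fun m hm => ?_⟩
    rw [hmax m]
    funext i
    have hn : k * m + (i:ℕ) ≥ N := by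
      have : m ≤ k * m := Nat.le_mul_of_pos_left m (by omega)
      omega
    have hc := hN (k * m + (i:ℕ)) hn
    have hdiv : (k * m + (i:ℕ)) / k = m := by
      rw [Nat.mul_add_div (by omega : 0 < k), Nat.div_eq_of_lt i.isLt]
      omega
    have hmod : (k * m + (i:ℕ)) % k = (i:ℕ) := by
      rw [Nat.mul_add_mod, Nat.mod_eq_of_lt i.isLt]
    simp only [concat, hdiv, hmod, bc, dif_pos i.isLt] at hc
    exact Fin.val_injective (by simpa using hc)
  · rintro ⟨M, hM⟩
    refine ⟨k * M, fun n hn => ?_⟩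
    have hdivM : M ≤ n / k := by
      rw [Nat.le_div_iff_mul_le (by omega : 0 < k), Nat.mul_comm]
      omega
    have hb := (hmax (n / k)).1 (hM (n / k) hdivM)
    simp only [concat, hb, bc, dif_pos (Nat.mod_lt n (by omega : 0 < k))]

lemma countable_C {T : ℕ} (τ : ℕ → ℕ) :
    Set.Countable {x : ℝ | ∃ c : ℕ → ℕ, (∃ N, ∀ n ≥ N, c n = τ n) ∧ x = ex T c} := by
  have hsub : {x : ℝ | ∃ c : ℕ → ℕ, (∃ N, ∀ n ≥ N, c n = τ n) ∧ x = ex T c}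
      ⊆ ⋃ N : ℕ, (fun p : Fin N → ℕ =>
        ex T (fun n => if h : n < N then p ⟨n, h⟩ else τ n)) '' Set.univ := by
    rintro x ⟨c, ⟨N, hN⟩, rfl⟩
    rw [Set.mem_iUnion]
    refine ⟨N, ⟨fun i => c (i : ℕ), Set.mem_univ _, ?_⟩⟩
    show ex T (fun n => if h : n < N then c n else τ n) = ex T c
    congr 1
    funext n
    split
    · rfl
    · exact (hN n (by omega)).symm
  apply Set.Countable.mono hsub
  apply Set.countable_iUnion
  intro N
  exact Set.Countable.image (Set.countable_univ) _
end blocks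

end L8

open L8 in
/-- Paper's Lemma 8, first case: if the block permutation `θ` defining `f^s_k`
has `j ≥ 2` fixed blocks, then the set of invariant points of `f^s_k` in
`[0,1)` has Hausdorff dimension `(log j)/(k · log s)`. -/
theorem stmt_8 (s k : ℕ) (hs : 2 ≤ s) (hk : 1 ≤ k)
    (θ : (Fin k → Fin s) ≃ (Fin k → Fin s))
    (hθ0 : θ (fun _ => ⟨0, by omega⟩) ≠ (fun _ => ⟨s - 1, by omega⟩))
    (Θ : (ℕ → Fin s) → (ℕ → Fin s))
    (hΘ : ∀ (a : ℕ → Fin s) (m : ℕ) (i : Fin k),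
      Θ a (k * m + (i : ℕ)) = θ (fun j => a (k * m + (j : ℕ))) i)
    (F : ℝ → ℝ)
    (hF : ∀ a : ℕ → Fin s, (¬ ∃ N, ∀ n ≥ N, (a n : ℕ) = s - 1) →
      F (∑' n : ℕ, ((a n : ℕ) : ℝ) / (s : ℝ) ^ (n + 1)) =
        ∑' n : ℕ, ((Θ a n : ℕ) : ℝ) / (s : ℝ) ^ (n + 1))
    (j : ℕ) (hj : 2 ≤ j)
    (hcard : {b : Fin k → Fin s | θ b = b}.ncard = j) :
    dimH {x ∈ Set.Ico (0 : ℝ) 1 | F x = x} =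
      ENNReal.ofReal (Real.log j / (k * Real.log s)) := by
  classical
  have hk0 : 0 < k := hk
  set t := s ^ k with ht_def
  have ht : 2 ≤ t := by
    calc 2 ≤ s := hs
      _ = s ^ 1 := (pow_one s).symm
      _ ≤ s ^ k := Nat.pow_le_pow_right (by omega) hk
  -- fixed blocks as a Finset
  have hfin : {b : Fin k → Fin s | θ b = b}.Finite := Set.toFinite _
  set Fb := hfin.toFinset with hFb_def
  have hFbcard : Fb.card = j := by
    rw [hFb_def, ← Set.ncard_eq_toFinset_card _ hfin, hcard]
  have hwlt : ∀ b : Fin k → Fin s, wv k s b < t := fun b => wv_lt hs b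
  set wFin : (Fin k → Fin s) → Fin t := fun b => ⟨wv k s b, hwlt b⟩ with hwFin_def
  have hwFininj : Function.Injective wFin := fun b b' h =>
    wv_inj hs (congrArg Fin.val h)
  set D : Finset (Fin t) := Fb.image wFin with hD_def
  have hDcard : D.card = j := by
    rw [hD_def, Finset.card_image_of_injective _ hwFininj, hFbcard]
  set ι : Fin j → Fin t := fun i => ((D.orderIsoOfFin hDcard i : {x // x ∈ D}) : Fin t)
    with hι_def
  have hι : StrictMono ι := fun a b hab =>
    Subtype.coe_lt_coe.2 ((D.orderIsoOfFin hDcard).strictMono hab)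
  have hιmem : ∀ i, ι i ∈ D := fun i => (D.orderIsoOfFin hDcard i).2
  have hιsurj : ∀ x ∈ D, ∃ i, ι i = x := fun x hx =>
    ⟨(D.orderIsoOfFin hDcard).symm ⟨x, hx⟩, by
      simp only [hι_def, OrderIso.apply_symm_apply]⟩
  set EcanSet : Set ℝ := {x : ℝ | ∃ e : ℕ → Fin j,
    Adm t (fun n => ((ι (e n)) : ℕ)) ∧ x = ex t (fun n => ((ι (e n)) : ℕ))} with hEcan_def
  set mb : Fin k → Fin s := (fun _ => ⟨s - 1, by omega⟩) with hmb_def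
  set τ : ℕ → ℕ := fun n => bc k s (θ.symm mb) (n % k) with hτ_def
  set CSet : Set ℝ := {x : ℝ | ∃ c : ℕ → ℕ, (∃ N, ∀ n ≥ N, c n = τ n) ∧ x = ex s c}
    with hC_def
  have hCc : CSet.Countable := countable_C τ
  -- Claim A : EcanSet ⊆ invariant set
  have hA : ∀ x ∈ EcanSet, x ∈ Set.Ico (0:ℝ) 1 ∧ F x = x := by
    rintro x ⟨e, hadm, rfl⟩
    have hmem : ∀ n, ∃ bb, bb ∈ Fb ∧ wFin bb = ι (e n) := by
      intro n
      obtain ⟨bb, hbb1, hbb2⟩ := Finset.mem_image.1 (hιmem (e n))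
      exact ⟨bb, hbb1, hbb2⟩
    choose b hb1 hb2 using hmem
    have hbfix : ∀ n, θ (b n) = b n := fun n => by
      have := hb1 n
      rw [hFb_def, Set.Finite.mem_toFinset] at this
      exact this
    have hwv : (fun n => ((ι (e n)) : ℕ)) = fun n => wv k s (b n) := by
      funext n
      rw [← hb2 n]
    have hxw : ex t (fun n => ((ι (e n)) : ℕ)) = ex s (concat k s b) := by
      rw [hwv, ht_def, ← ex_concat hs hk b]
    set a : ℕ → Fin s := fun n => b (n / k) ⟨n % k, Nat.mod_lt n hk0⟩ with ha_def
    have hca : (fun n => ((a n) : ℕ)) = concat k s b := by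
      funext n
      simp only [ha_def, concat, bc, dif_pos (Nat.mod_lt n hk0)]
    have hadm_s : Adm s (fun n => ((a n) : ℕ)) := by
      rw [hca]
      apply (adm_concat_iff hs hk b).2
      rw [← hwv]
      exact hadm
    have hblk : ∀ m : ℕ, (fun i : Fin k => a (k * m + (i : ℕ))) = b m := by
      intro m
      funext i
      have hdiv : (k * m + (i : ℕ)) / k = m := by
        rw [Nat.mul_add_div hk0, Nat.div_eq_of_lt i.isLt]
        omega
      have hmod : (k * m + (i : ℕ)) % k = (i : ℕ) := by
        rw [Nat.mul_add_mod, Nat.mod_eq_of_lt i.isLt]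
      simp only [ha_def, hdiv, hmod, Fin.eta]
    have hΘa : Θ a = a := by
      funext n
      have hmodlt : n % k < k := Nat.mod_lt n hk0
      have h1 : Θ a (k * (n / k) + ((⟨n % k, hmodlt⟩ : Fin k) : ℕ))
          = θ (fun jj : Fin k => a (k * (n / k) + (jj : ℕ))) ⟨n % k, hmodlt⟩ :=
        hΘ a (n / k) ⟨n % k, hmodlt⟩
      have h2 : k * (n / k) + ((⟨n % k, hmodlt⟩ : Fin k) : ℕ) = n := Nat.div_add_mod n k
      rw [h2] at h1
      rw [h1, hblk (n / k), hbfix (n / k)]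
    have hFx := hF a hadm_s
    rw [hΘa] at hFx
    have hxa : ex t (fun n => ((ι (e n)) : ℕ)) = ex s (fun n => ((a n) : ℕ)) := by
      rw [hca]
      exact hxw
    refine ⟨⟨ex_nonneg ht _, ex_lt_one ht _ (fun n => (ι (e n)).isLt) hadm⟩, ?_⟩
    rw [hxa]
    exact hFx
  -- Claim B
  have hB : ∀ x, x ∈ Set.Ico (0:ℝ) 1 → F x = x → x ∈ EcanSet ∪ CSet := by
    rintro x ⟨hx0, hx1⟩ hFx
    obtain ⟨aN, haN, hadmN, hexN⟩ := exists_digits hs x hx0 hx1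
    set a : ℕ → Fin s := fun n => ⟨aN n, haN n⟩ with ha_def
    have hcoe : (fun n => ((a n) : ℕ)) = aN := rfl
    have hadm_a : Adm s (fun n => ((a n) : ℕ)) := by rw [hcoe]; exact hadmN
    have hFa := hF a hadm_a
    have hxa : ex s (fun n => ((a n) : ℕ)) = x := by rw [hcoe]; exact hexN
    have hxΘ : ex s (fun n => ((Θ a n) : ℕ)) = x := by
      calc ex s (fun n => ((Θ a n) : ℕ))
          = F (ex s (fun n => ((a n) : ℕ))) := hFa.symm
        _ = F x := by rw [hxa]
        _ = x := hFx
    by_cases hadm2 : Adm s (fun n => ((Θ a n) : ℕ))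
    · left
      have heq : (fun n => ((Θ a n) : ℕ)) = (fun n => ((a n) : ℕ)) :=
        ex_inj hs (fun n => (Θ a n).isLt) (fun n => (a n).isLt) hadm2 hadm_a
          (hxΘ.trans hxa.symm)
      have hΘa : Θ a = a := funext fun n => Fin.val_injective (congrFun heq n)
      set blk : ℕ → (Fin k → Fin s) := fun m => fun i => a (k * m + (i : ℕ)) with hblk_def
      have hbfix : ∀ m, θ (blk m) = blk m := by
        intro m
        funext i
        have h1 : Θ a (k * m + (i : ℕ)) = θ (fun jj : Fin k => a (k * m + (jj : ℕ))) i :=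
          hΘ a m i
        rw [hΘa] at h1
        exact h1.symm
      have hmemD : ∀ m, wFin (blk m) ∈ D := fun m =>
        Finset.mem_image.2 ⟨blk m, by
          rw [hFb_def, Set.Finite.mem_toFinset]
          exact hbfix m, rfl⟩
      choose e he using fun m => hιsurj (wFin (blk m)) (hmemD m)
      have hwv2 : (fun n => ((ι (e n)) : ℕ)) = fun n => wv k s (blk n) := by
        funext n
        rw [he n]
      have hconcat : concat k s blk = fun n => ((a n) : ℕ) := by
        funext n
        have hmodlt : n % k < k := Nat.mod_lt n hk0
        simp only [concat, bc, dif_pos hmodlt, hblk_def]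
        show ((a (k * (n / k) + ((⟨n % k, hmodlt⟩ : Fin k) : ℕ))) : ℕ) = ((a n) : ℕ)
        congr 1
        exact congrArg a (Nat.div_add_mod n k)
      refine ⟨e, ?_, ?_⟩
      · rw [hwv2]
        apply (adm_concat_iff hs hk blk).1
        rw [hconcat, hcoe]
        exact hadmN
      · rw [hwv2, ht_def, ← ex_concat hs hk blk, hconcat, hcoe, hexN]
    · right
      rw [Adm, not_not] at hadm2
      obtain ⟨N, hN⟩ := hadm2
      refine ⟨aN, ⟨k * N, fun n hn => ?_⟩, hexN.symm⟩
      have hblkmax : ∀ m, N ≤ m → (fun i : Fin k => a (k * m + (i : ℕ))) = θ.symm mb := by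
        intro m hm
        apply θ.injective
        rw [Equiv.apply_symm_apply]
        funext i
        have h1 : Θ a (k * m + (i : ℕ)) = θ (fun jj : Fin k => a (k * m + (jj : ℕ))) i :=
          hΘ a m i
        have hpos : k * m + (i : ℕ) ≥ N := by
          have : m ≤ k * m := Nat.le_mul_of_pos_left m hk0
          omega
        have h2 : ((Θ a (k * m + (i : ℕ))) : ℕ) = s - 1 := hN _ hpos
        apply Fin.val_injective
        rw [← h1, h2]
      have hmodlt : n % k < k := Nat.mod_lt n hk0
      have hdivN : N ≤ n / k := by
        rw [Nat.le_div_iff_mul_le hk0, Nat.mul_comm]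
        omega
      have h3 := congrFun (hblkmax (n / k) hdivN) (⟨n % k, hmodlt⟩ : Fin k)
      have h4 : aN n = ((a n) : ℕ) := rfl
      rw [h4]
      have h5 : a n = a (k * (n / k) + ((⟨n % k, hmodlt⟩ : Fin k) : ℕ)) := by
        rw [congrArg a (Nat.div_add_mod n k)]
      rw [h5, h3]
      simp only [hτ_def, bc, dif_pos hmodlt]
  -- conclusion
  have hdimEcan : dimH EcanSet = ENNReal.ofReal (dexp j t) := cantor_dimH hι hj ht
  have hlogt : dexp j t = Real.log j / (k * Real.log s) := by
    rw [dexp, ht_def]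
    congr 1
    rw [Nat.cast_pow, Real.log_pow]
  rw [hlogt] at hdimEcan
  apply le_antisymm
  · calc dimH {x ∈ Set.Ico (0:ℝ) 1 | F x = x} ≤ dimH (EcanSet ∪ CSet) :=
        dimH_mono (fun x hx => hB x hx.1 hx.2)
      _ = max (dimH EcanSet) (dimH CSet) := dimH_union _ _
      _ = dimH EcanSet := by
          rw [max_eq_left]
          rw [hCc.dimH_zero]
          exact zero_le
      _ = ENNReal.ofReal (Real.log j / (k * Real.log s)) := hdimEcan
  · rw [← hdimEcan]
    exact dimH_mono (fun x hx => ⟨(hA x hx).1, (hA x hx).2⟩)
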